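/- The utility function of a cyclic transaction is strictly concave on the nonnegative reals: for a cycle of length n+1 with positive reserves and fee parameters r₁, r₂ ∈ (0,1], for all 0 ≤ δ₁ < δ₂ and all t ∈ (0,1), U(t·δ₁ + (1−t)·δ₂) > t·U(δ₁) + (1−t)·U(δ₂). -/

import Mathlib

/-- Constant-product AMM swap: output of swapping input `δ` through a pool with
input-side reserve `a`, output-side reserve `b` and fee parameters `r1, r2`. -/
noncomputable def swap (r1 r2 a b δ : ℝ) : ℝ := r1 * r2 * b * δ / (a + r1 * δ)

/-- Output of feeding an input through a sequence of pools; each pool is a pair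
`(input-side reserve, output-side reserve)` along the direction of trade. -/
noncomputable def cyclicOut (r1 r2 : ℝ) : List (ℝ × ℝ) → ℝ → ℝ
  | [], δ => δ
  | p :: ps, δ => cyclicOut r1 r2 ps (swap r1 r2 p.1 p.2 δ)

/-- Arbitrage index of a cycle of pools: product of output-side reserves divided
by product of input-side reserves. -/
noncomputable def arbIndex (ps : List (ℝ × ℝ)) : ℝ :=
  (ps.map Prod.snd).prod / (ps.map Prod.fst).prod

/-- The reversed cycle: the same pools in opposite order with the roles of the
two reserves of each pool interchanged. -/
def revPools (ps : List (ℝ × ℝ)) : List (ℝ × ℝ) := (ps.map Prod.swap).reverse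

/-- The updated pools after executing a cyclic transaction with input `δ`:
each pool's input-side reserve increases by the amount swapped in and its
output-side reserve decreases by the amount swapped out. -/
noncomputable def execPools (r1 r2 : ℝ) : List (ℝ × ℝ) → ℝ → List (ℝ × ℝ)
  | [], _ => []
  | p :: ps, δ =>
      (p.1 + δ, p.2 - swap r1 r2 p.1 p.2 δ) :: execPools r1 r2 ps (swap r1 r2 p.1 p.2 δ)

lemma swap_nonneg' {r1 r2 a b : ℝ} (hr1 : 0 < r1) (hr2 : 0 < r2) (ha : 0 < a) (hb : 0 < b)
    {δ : ℝ} (hδ : 0 ≤ δ) : 0 ≤ swap r1 r2 a b δ := by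
  unfold swap
  apply div_nonneg <;> positivity

lemma swap_strictMono' {r1 r2 a b : ℝ} (hr1 : 0 < r1) (hr2 : 0 < r2) (ha : 0 < a) (hb : 0 < b)
    {x y : ℝ} (hx : 0 ≤ x) (hxy : x < y) : swap r1 r2 a b x < swap r1 r2 a b y := by
  have hy : 0 ≤ y := le_of_lt (lt_of_le_of_lt hx hxy)
  have hdx : 0 < a + r1 * x := by positivity
  have hdy : 0 < a + r1 * y := by positivity
  unfold swap
  rw [div_lt_div_iff₀ hdx hdy]
  nlinarith [mul_pos (mul_pos (mul_pos (mul_pos hr1 hr2) hb) ha) (sub_pos.mpr hxy)]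

lemma swap_strictConcave' {r1 r2 a b : ℝ} (hr1 : 0 < r1) (hr2 : 0 < r2) (ha : 0 < a) (hb : 0 < b)
    {x y t : ℝ} (hx : 0 ≤ x) (hxy : x < y) (ht : 0 < t) (ht' : t < 1) :
    t * swap r1 r2 a b x + (1 - t) * swap r1 r2 a b y < swap r1 r2 a b (t * x + (1 - t) * y) := by
  have hy : 0 ≤ y := le_of_lt (lt_of_le_of_lt hx hxy)
  have ht1 : 0 ≤ 1 - t := by linarith
  have hm : 0 ≤ t * x + (1 - t) * y := by positivity
  have hdx : 0 < a + r1 * x := by positivity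
  have hdy : 0 < a + r1 * y := by positivity
  have hdm : 0 < a + r1 * (t * x + (1 - t) * y) := by positivity
  have key : swap r1 r2 a b (t * x + (1 - t) * y)
      - (t * swap r1 r2 a b x + (1 - t) * swap r1 r2 a b y)
      = (r1 * r2 * b * (r1 * a * t * (1 - t) * (x - y) ^ 2))
        / ((a + r1 * x) * (a + r1 * y) * (a + r1 * (t * x + (1 - t) * y))) := by
    unfold swap
    field_simp
    ring
  have hpos : 0 < (r1 * r2 * b * (r1 * a * t * (1 - t) * (x - y) ^ 2))
      / ((a + r1 * x) * (a + r1 * y) * (a + r1 * (t * x + (1 - t) * y))) := by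
    have hne : (x - y) ^ 2 > 0 := by nlinarith
    apply div_pos
    · have : 0 < 1 - t := by linarith
      positivity
    · positivity
  linarith

lemma cyclicOut_props (r1 r2 : ℝ) (hr1 : 0 < r1) (hr2 : 0 < r2) :
    ∀ ps : List (ℝ × ℝ), (∀ p ∈ ps, 0 < p.1 ∧ 0 < p.2) →
      (∀ δ, 0 ≤ δ → 0 ≤ cyclicOut r1 r2 ps δ) ∧
      (∀ x y, 0 ≤ x → x < y → cyclicOut r1 r2 ps x < cyclicOut r1 r2 ps y) ∧
      (∀ x y t, 0 ≤ x → 0 ≤ y → 0 < t → t < 1 →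
        t * cyclicOut r1 r2 ps x + (1 - t) * cyclicOut r1 r2 ps y
          ≤ cyclicOut r1 r2 ps (t * x + (1 - t) * y)) ∧
      (ps ≠ [] → ∀ x y t, 0 ≤ x → x < y → 0 < t → t < 1 →
        t * cyclicOut r1 r2 ps x + (1 - t) * cyclicOut r1 r2 ps y
          < cyclicOut r1 r2 ps (t * x + (1 - t) * y)) := by
  intro ps
  induction ps with
  | nil =>
      intro _
      refine ⟨fun δ hδ => hδ, fun x y hx hxy => hxy, ?_, fun h => absurd rfl h⟩
      intro x y t hx hy ht ht'
      simp only [cyclicOut]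
      exact le_refl _
  | cons p ps ih =>
      intro hpos
      obtain ⟨ha, hb⟩ := hpos p (List.mem_cons_self (a := p) (l := ps))
      have hpos' : ∀ q ∈ ps, 0 < q.1 ∧ 0 < q.2 := fun q hq => hpos q (List.mem_cons_of_mem p hq)
      obtain ⟨ihn, ihm, ihc, _⟩ := ih hpos'
      have hdef : ∀ δ, cyclicOut r1 r2 (p :: ps) δ = cyclicOut r1 r2 ps (swap r1 r2 p.1 p.2 δ) :=
        fun δ => rfl
      have hnn : ∀ δ, 0 ≤ δ → 0 ≤ cyclicOut r1 r2 (p :: ps) δ := by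
        intro δ hδ
        rw [hdef]
        exact ihn _ (swap_nonneg' hr1 hr2 ha hb hδ)
      have hmono : ∀ x y, 0 ≤ x → x < y →
          cyclicOut r1 r2 (p :: ps) x < cyclicOut r1 r2 (p :: ps) y := by
        intro x y hx hxy
        rw [hdef, hdef]
        exact ihm _ _ (swap_nonneg' hr1 hr2 ha hb hx) (swap_strictMono' hr1 hr2 ha hb hx hxy)
      have hstrict : ∀ x y t, 0 ≤ x → x < y → 0 < t → t < 1 →
          t * cyclicOut r1 r2 (p :: ps) x + (1 - t) * cyclicOut r1 r2 (p :: ps) y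
            < cyclicOut r1 r2 (p :: ps) (t * x + (1 - t) * y) := by
        intro x y t hx hxy ht ht'
        rw [hdef, hdef, hdef]
        set u := swap r1 r2 p.1 p.2 x with hu
        set v := swap r1 r2 p.1 p.2 y with hv
        have hu0 : 0 ≤ u := swap_nonneg' hr1 hr2 ha hb hx
        have hv0 : 0 ≤ v := swap_nonneg' hr1 hr2 ha hb
          (le_of_lt (lt_of_le_of_lt hx hxy))
        have h1 : t * cyclicOut r1 r2 ps u + (1 - t) * cyclicOut r1 r2 ps v
            ≤ cyclicOut r1 r2 ps (t * u + (1 - t) * v) := ihc u v t hu0 hv0 ht ht'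
        have h2 : t * u + (1 - t) * v < swap r1 r2 p.1 p.2 (t * x + (1 - t) * y) :=
          swap_strictConcave' hr1 hr2 ha hb hx hxy ht ht'
        have h3 : 0 ≤ t * u + (1 - t) * v := by
          have : 0 ≤ 1 - t := by linarith
          positivity
        have h4 := ihm _ _ h3 h2
        linarith
      refine ⟨hnn, hmono, ?_, fun _ => hstrict⟩
      intro x y t hx hy ht ht'
      rcases lt_trichotomy x y with h | h | h
      · exact le_of_lt (hstrict x y t hx h ht ht')
      · subst h
        have : t * x + (1 - t) * x = x := by ring
        rw [this]; linarith
      · have h5 := hstrict y x (1 - t) hy h (by linarith) (by linarith)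
        have e1 : (1 - t) * y + (1 - (1 - t)) * x = t * x + (1 - t) * y := by ring
        rw [e1] at h5
        linarith

/-- the utility of a cyclic transaction is strictly concave on the
nonnegative reals. -/
theorem utility_strictly_concave
    (n : ℕ) (ps : List (ℝ × ℝ)) (hlen : ps.length = n + 1)
    (hpos : ∀ p ∈ ps, 0 < p.1 ∧ 0 < p.2)
    (r1 r2 : ℝ) (hr1 : 0 < r1) (hr1' : r1 ≤ 1) (hr2 : 0 < r2) (hr2' : r2 ≤ 1) :
    ∀ δ1 δ2 : ℝ, 0 ≤ δ1 → δ1 < δ2 → ∀ t : ℝ, 0 < t → t < 1 →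
      t * (cyclicOut r1 r2 ps δ1 - δ1) + (1 - t) * (cyclicOut r1 r2 ps δ2 - δ2) <
        cyclicOut r1 r2 ps (t * δ1 + (1 - t) * δ2) - (t * δ1 + (1 - t) * δ2) := by
  intro δ1 δ2 h1 h12 t ht ht'
  have hne : ps ≠ [] := by
    intro h; rw [h] at hlen; simp at hlen
  obtain ⟨_, _, _, hstrict⟩ := cyclicOut_props r1 r2 hr1 hr2 ps hpos
  have key := hstrict hne δ1 δ2 t h1 h12 ht ht'
  nlinarith
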